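/- Let f_0 be the density of (X, Y) ∈ ℝ^{d-m} × ℝ^m such that conditionally on X = x the residual Y - (β_0 + βᵀx) is centrally symmetric in ℝ^m, let G_0 be a continuous CDF with G_0(-t) = 1 - G_0(t), let w_0 : ℝ^m → ℝ be odd measurable and h : ℝ^{d-m} → ℝ measurable. Then f(x, y) = 2 f_0(x, y) G_0( w_0(y - β_0 - βᵀx) h(x) ) is a probability density on ℝ^d. -/

import Mathlib

open MeasureTheory

lemma stmt17_aux {k m : ℕ}
    (f0 : (Fin k → ℝ) × (Fin m → ℝ) → ℝ) (hf0m : Measurable f0) (hf0nn : ∀ p, 0 ≤ f0 p)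
    (hf0prob : ∫ p, f0 p = 1)
    (mY : (Fin k → ℝ) → (Fin m → ℝ)) (hmYm : Measurable mY)
    (hcondsym : ∀ (x : Fin k → ℝ) (u : Fin m → ℝ),
      f0 (x, mY x + u) = f0 (x, mY x - u))
    (G0 : ℝ → ℝ) (hG0c : Continuous G0) (hG0mono : Monotone G0)
    (hG0bot : Filter.Tendsto G0 Filter.atBot (nhds 0))
    (hG0top : Filter.Tendsto G0 Filter.atTop (nhds 1))
    (hG0sym : ∀ t, G0 (-t) = 1 - G0 t)
    (w0 : (Fin m → ℝ) → ℝ) (hw0 : Measurable w0) (hw0odd : ∀ u, w0 (-u) = -w0 u)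
    (h : (Fin k → ℝ) → ℝ) (hh : Measurable h) :
    ∫ p : (Fin k → ℝ) × (Fin m → ℝ),
      2 * f0 p * G0 (w0 (p.2 - mY p.1) * h p.1) = 1 := by
  set g : (Fin k → ℝ) × (Fin m → ℝ) → ℝ :=
    fun p => 2 * f0 p * G0 (w0 (p.2 - mY p.1) * h p.1) with hgdef
  -- bounds on G0
  have hG0le : ∀ t, G0 t ≤ 1 := fun t =>
    ge_of_tendsto hG0top (Filter.eventually_atTop.2 ⟨t, fun s hs => hG0mono hs⟩)
  have hG0nn : ∀ t, 0 ≤ G0 t := fun t =>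
    le_of_tendsto hG0bot (Filter.eventually_atBot.2 ⟨t, fun s hs => hG0mono hs⟩)
  -- measurability
  have hWm : Measurable fun p : (Fin k → ℝ) × (Fin m → ℝ) =>
      w0 (p.2 - mY p.1) * h p.1 :=
    (hw0.comp (measurable_snd.sub (hmYm.comp measurable_fst))).mul (hh.comp measurable_fst)
  have hgm : Measurable g :=
    (measurable_const.mul hf0m).mul (hG0c.measurable.comp hWm)
  -- integrability
  have hf0int : Integrable f0 := integrable_of_integral_eq_one hf0prob
  have h2f0int : Integrable (fun p => 2 * f0 p) := hf0int.const_mul 2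
  have hgint : Integrable g := by
    refine h2f0int.mono' hgm.aestronglyMeasurable (Filter.Eventually.of_forall fun p => ?_)
    have h1 : |G0 (w0 (p.2 - mY p.1) * h p.1)| ≤ 1 :=
      abs_le.2 ⟨by linarith [hG0nn (w0 (p.2 - mY p.1) * h p.1)], hG0le _⟩
    have h2 : (0:ℝ) ≤ 2 * f0 p := by linarith [hf0nn p]
    calc ‖g p‖ = |2 * f0 p| * |G0 (w0 (p.2 - mY p.1) * h p.1)| := by
          rw [hgdef]; simp [abs_mul]
      _ ≤ |2 * f0 p| * 1 := by
          exact mul_le_mul_of_nonneg_left h1 (abs_nonneg _)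
      _ = 2 * f0 p := by rw [mul_one, abs_of_nonneg h2]
  have hsubint : Integrable (fun p => 2 * f0 p - g p) := h2f0int.sub hgint
  -- key pointwise reflection identity
  have key : ∀ (x : Fin k → ℝ) (y : Fin m → ℝ),
      g (x, (fun j => 2 * mY x j) - y) = 2 * f0 (x, y) - g (x, y) := by
    intro x y
    have e1 : ((fun j => 2 * mY x j) - y : Fin m → ℝ) = mY x - (y - mY x) := by
      funext j; simp [Pi.sub_apply]; ring
    have e2 : (mY x + (y - mY x) : Fin m → ℝ) = y := by
      funext j; simp
    have hf : f0 (x, (fun j => 2 * mY x j) - y) = f0 (x, y) := by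
      rw [e1, ← hcondsym x (y - mY x), e2]
    have e3 : ((fun j => 2 * mY x j) - y - mY x : Fin m → ℝ) = -(y - mY x) := by
      funext j; simp [Pi.sub_apply, Pi.neg_apply]; ring
    have hw' : w0 ((fun j => 2 * mY x j) - y - mY x) = -w0 (y - mY x) := by
      rw [e3, hw0odd]
    simp only [hgdef, hf, hw', neg_mul, hG0sym]
    ring
  -- reflection substitution via Fubini
  have hgint' : Integrable g ((volume : Measure (Fin k → ℝ)).prod volume) := by
    rwa [← Measure.volume_eq_prod]
  have hsubint' : Integrable (fun p => 2 * f0 p - g p)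
      ((volume : Measure (Fin k → ℝ)).prod volume) := by
    rwa [← Measure.volume_eq_prod]
  have main : ∫ p, g p = ∫ p, (2 * f0 p - g p) := by
    rw [Measure.volume_eq_prod, integral_prod _ hgint', integral_prod _ hsubint']
    congr 1
    funext x
    calc ∫ y, g (x, y)
        = ∫ y, g (x, (fun j => 2 * mY x j) - y) :=
          (integral_sub_left_eq_self (fun y => g (x, y)) volume (fun j => 2 * mY x j)).symm
      _ = ∫ y, (2 * f0 (x, y) - g (x, y)) := by simp only [key]
  have hsb : ∫ p, (2 * f0 p - g p) = 2 - ∫ p, g p := by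
    rw [integral_sub h2f0int hgint, integral_const_mul, hf0prob]
    ring
  rw [hsb] at main
  linarith

theorem stmt17 {k m : ℕ}
    (f0 : (Fin k → ℝ) × (Fin m → ℝ) → ℝ) (hf0m : Measurable f0) (hf0nn : ∀ p, 0 ≤ f0 p)
    (hf0prob : ∫ p, f0 p = 1)
    (β0 : Fin m → ℝ) (β : Fin k → Fin m → ℝ)
    (hcondsym : ∀ (x : Fin k → ℝ) (u : Fin m → ℝ),
      f0 (x, (fun j => β0 j + ∑ i, β i j * x i) + u)
        = f0 (x, (fun j => β0 j + ∑ i, β i j * x i) - u))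
    (G0 : ℝ → ℝ) (hG0c : Continuous G0) (hG0mono : Monotone G0)
    (hG0bot : Filter.Tendsto G0 Filter.atBot (nhds 0))
    (hG0top : Filter.Tendsto G0 Filter.atTop (nhds 1))
    (hG0sym : ∀ t, G0 (-t) = 1 - G0 t)
    (w0 : (Fin m → ℝ) → ℝ) (hw0 : Measurable w0) (hw0odd : ∀ u, w0 (-u) = -w0 u)
    (h : (Fin k → ℝ) → ℝ) (hh : Measurable h) :
    ∫ p : (Fin k → ℝ) × (Fin m → ℝ),
      2 * f0 p * G0 (w0 (p.2 - fun j => β0 j + ∑ i, β i j * p.1 i) * h p.1) = 1 := by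
  have hmYm : Measurable (fun x : Fin k → ℝ => (fun j => β0 j + ∑ i, β i j * x i : Fin m → ℝ)) := by
    apply measurable_pi_lambda
    intro j
    exact measurable_const.add (Finset.measurable_sum _ fun i _ =>
      by fun_prop)
  exact stmt17_aux f0 hf0m hf0nn hf0prob
    (fun x j => β0 j + ∑ i, β i j * x i) hmYm hcondsym
    G0 hG0c hG0mono hG0bot hG0top hG0sym w0 hw0 hw0odd h hh
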